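/- Let X be a Dedekind complete Riesz space with weak order unit e and let T be a conditional expectation operator on X with Te = e. For a net (x_α)_{α∈A} in X and an element x ∈ X, the following are equivalent: (i) for every real ε > 0, the net (T P_{(|x_α − x| − εe)^+} e) order converges to 0; (ii) for every u ∈ X with u ≥ 0, the net (T(|x_α − x| ∧ u)) order converges to 0; (iii) the net (T(|x_α − x| ∧ e)) order converges to 0. -/

import Mathlib

/-- A net `x : A → X` order converges to `l` if there is a (nonempty, upward directed)
net `y : B → X` decreasing to `0` (i.e. antitone with infimum `0`) such that for every
index `b` the net `x` eventually satisfies `|x a - l| ≤ y b`. -/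
def OrderConvergesTo {X : Type u} [Lattice X] [AddCommGroup X]
    {A : Type v} [Preorder A] (x : A → X) (l : X) : Prop :=
  ∃ (B : Type u) (r : B → B → Prop) (y : B → X),
    Nonempty B ∧
    (∀ b, r b b) ∧
    (∀ b₁ b₂ b₃, r b₁ b₂ → r b₂ b₃ → r b₁ b₃) ∧
    (∀ b₁ b₂, ∃ b₃, r b₁ b₃ ∧ r b₂ b₃) ∧
    (∀ b₁ b₂, r b₁ b₂ → y b₂ ≤ y b₁) ∧
    IsGLB (Set.range y) 0 ∧
    ∀ b, ∃ a₀ : A, ∀ a : A, a₀ ≤ a → |x a - l| ≤ y b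

/-- The band projection associated to a positive element `w`, applied to a positive
element `z` : `P_w z = sup_{n ≥ 1} (z ⊓ n • w)`. -/
noncomputable def bandProjApply {X : Type u} [ConditionallyCompleteLattice X]
    [AddCommGroup X] (w z : X) : X :=
  ⨆ n : ℕ, z ⊓ ((n + 1) • w)

section Helpers

universe u' v'

variable {X : Type u'} [ConditionallyCompleteLattice X] [AddCommGroup X]
    [CovariantClass X X (· + ·) (· ≤ ·)] [Module ℝ X] [PosSMulMono ℝ X]

lemma my_smul_nonneg {c : ℝ} (hc : 0 ≤ c) {a : X} (ha : 0 ≤ a) : 0 ≤ c • a := by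
  simpa using smul_le_smul_of_nonneg_left ha hc

lemma my_smul_cancel {c : ℝ} (hc : 0 < c) {a b : X} (h : c • a ≤ c • b) : a ≤ b := by
  have := smul_le_smul_of_nonneg_left h (le_of_lt (inv_pos.2 hc))
  rwa [inv_smul_smul₀ hc.ne', inv_smul_smul₀ hc.ne'] at this

lemma my_smul_le_smul_right {c d : ℝ} (h : c ≤ d) {a : X} (ha : 0 ≤ a) :
    c • a ≤ d • a := by
  have := my_smul_nonneg (sub_nonneg.2 h) ha
  rw [sub_smul] at this
  exact sub_nonneg.1 this

lemma my_smul_le_self {c : ℝ} (h0 : 0 ≤ c) (h1 : c ≤ 1) {a : X} (ha : 0 ≤ a) :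
    c • a ≤ a := by
  simpa using my_smul_le_smul_right h1 ha

lemma my_glb_smul {B : Type*} {y : B → X} {c : ℝ} (hc : 0 < c)
    (h : IsGLB (Set.range y) 0) : IsGLB (Set.range fun b => c • y b) 0 := by
  constructor
  · rintro _ ⟨b, rfl⟩
    exact my_smul_nonneg hc.le (h.1 ⟨b, rfl⟩)
  · intro m hm
    have hm' : c⁻¹ • m ≤ 0 := by
      refine h.2 ?_
      rintro _ ⟨b, rfl⟩
      have := hm ⟨b, rfl⟩
      have h2 := smul_le_smul_of_nonneg_left this (le_of_lt (inv_pos.2 hc))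
      rwa [inv_smul_smul₀ hc.ne'] at h2
    calc m = c • (c⁻¹ • m) := (smul_inv_smul₀ hc.ne' m).symm
    _ ≤ c • (0 : X) := smul_le_smul_of_nonneg_left hm' hc.le
    _ = 0 := smul_zero c

/-- `z ⊓ (c • e) ≤ c • (z ⊓ e)` for `c ≥ 1` and `z, e ≥ 0`. -/
lemma my_inf_smul_le {c : ℝ} (hc : 1 ≤ c) {z e : X} (hz : 0 ≤ z) (he : 0 ≤ e) :
    z ⊓ (c • e) ≤ c • (z ⊓ e) := by
  have hc0 : (0 : ℝ) < c := lt_of_lt_of_le one_pos hc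
  have h1 : c⁻¹ • (z ⊓ (c • e)) ≤ z ⊓ e := by
    refine le_inf ?_ ?_
    · refine le_trans (smul_le_smul_of_nonneg_left inf_le_left (le_of_lt (inv_pos.2 hc0))) ?_
      exact my_smul_le_self (le_of_lt (inv_pos.2 hc0)) (inv_le_one_of_one_le₀ hc) hz
    · refine le_trans (smul_le_smul_of_nonneg_left inf_le_right (le_of_lt (inv_pos.2 hc0))) ?_
      rw [inv_smul_smul₀ hc0.ne']
  calc z ⊓ (c • e) = c • (c⁻¹ • (z ⊓ (c • e))) := (smul_inv_smul₀ hc0.ne' _).symm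
  _ ≤ c • (z ⊓ e) := smul_le_smul_of_nonneg_left h1 hc0.le

/-- subadditivity of `· ⊓ c` on nonnegative elements. -/
lemma my_inf_subadd {x y c : X} (hx : 0 ≤ x) (hy : 0 ≤ y) (hc : 0 ≤ c) :
    (x + y) ⊓ c ≤ x ⊓ c + y ⊓ c := by
  have h1 : (x + y) ⊓ c ≤ x ⊓ c + y := by
    have e1 : (x + y) ⊓ c - y = x ⊓ (c - y) := by
      rw [inf_sub]; congr 1 <;> abel
    have e2 : x ⊓ (c - y) ≤ x ⊓ c := inf_le_inf_left x (sub_le_self c hy)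
    have := e1 ▸ e2
    calc (x + y) ⊓ c = ((x + y) ⊓ c - y) + y := by abel
    _ ≤ x ⊓ c + y := add_le_add_left this y
  have h2 : (x + y) ⊓ c - x ⊓ c ≤ y ⊓ c := by
    refine le_inf ?_ ?_
    · have : (x + y) ⊓ c ≤ x ⊓ c + y := h1
      exact sub_le_iff_le_add'.2 (by rwa [add_comm] at this)
    · have hxc : 0 ≤ x ⊓ c := le_inf hx hc
      calc (x + y) ⊓ c - x ⊓ c ≤ c - 0 := sub_le_sub inf_le_right hxc
      _ = c := sub_zero c
  calc (x + y) ⊓ c = ((x + y) ⊓ c - x ⊓ c) + x ⊓ c := by abel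
  _ ≤ y ⊓ c + x ⊓ c := add_le_add_left h2 _
  _ = x ⊓ c + y ⊓ c := by abel

lemma my_nsmul_disjoint {a c : X} (ha : 0 ≤ a) (hc : 0 ≤ c) (h : a ⊓ c = 0) :
    ∀ n : ℕ, (n • a) ⊓ c = 0 := by
  intro n
  induction n with
  | zero => simpa using inf_eq_left.2 hc
  | succ n ih =>
    refine le_antisymm ?_ (le_inf (nsmul_nonneg ha _) hc)
    have : (n + 1) • a = n • a + a := succ_nsmul a n
    rw [this]
    calc (n • a + a) ⊓ c ≤ (n • a) ⊓ c + a ⊓ c := my_inf_subadd (nsmul_nonneg ha n) ha hc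
    _ = 0 := by rw [ih, h, add_zero]

lemma my_bandProj_nonneg {w e : X} (hw : 0 ≤ w) (he : 0 ≤ e) :
    0 ≤ bandProjApply w e := by
  have hbdd : BddAbove (Set.range fun n : ℕ => e ⊓ ((n + 1) • w)) :=
    ⟨e, by rintro _ ⟨n, rfl⟩; exact inf_le_left⟩
  calc (0 : X) ≤ e ⊓ ((0 + 1) • w) := le_inf he (nsmul_nonneg hw _)
  _ ≤ bandProjApply w e := le_ciSup hbdd 0

lemma my_bandProj_mono {w w' e : X} (h : w ≤ w') :
    bandProjApply w e ≤ bandProjApply w' e := by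
  refine ciSup_mono ⟨e, ?_⟩ fun n => inf_le_inf_left e (nsmul_le_nsmul_right h _)
  rintro _ ⟨n, rfl⟩; exact inf_le_left

/-- Key inequality: `ε • P_{(z - εe)⁺} e ≤ z ⊓ e` for `0 < ε ≤ 1`. -/
lemma my_key1 {ε : ℝ} (hε0 : 0 < ε) (hε1 : ε ≤ 1) {z e : X} (hz : 0 ≤ z) (he : 0 ≤ e) :
    ε • bandProjApply ((z - ε • e) ⊔ 0) e ≤ z ⊓ e := by
  set w : X := (z - ε • e) ⊔ 0 with hwdef
  have hw0 : 0 ≤ w := le_sup_right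
  set q : X := (ε • e - z) ⊔ 0 with hqdef
  have hq0 : 0 ≤ q := le_sup_right
  have hdisj : w ⊓ q = 0 := by
    have h := posPart_inf_negPart_eq_zero (z - ε • e)
    rw [posPart_def, negPart_def, neg_sub] at h
    exact h
  have hkey : ∀ n : ℕ, ε • (e ⊓ ((n + 1) • w)) ≤ z ⊓ e := by
    intro n
    set t : X := e ⊓ ((n + 1) • w) with htdef
    have ht0 : 0 ≤ t := le_inf he (nsmul_nonneg hw0 _)
    have hnd : ((n + 1) • w) ⊓ q = 0 := my_nsmul_disjoint hw0 hq0 hdisj (n + 1)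
    have htq : t ⊓ q = 0 :=
      le_antisymm (le_trans (inf_le_inf_right q inf_le_right) hnd.le) (le_inf ht0 hq0)
    have hεtq : (ε • t) ⊓ q = 0 := by
      refine le_antisymm ?_ (le_inf (my_smul_nonneg hε0.le ht0) hq0)
      calc (ε • t) ⊓ q ≤ t ⊓ q := inf_le_inf_right q (my_smul_le_self hε0.le hε1 ht0)
      _ = 0 := htq
    have hsum : ε • t + q = (ε • t) ⊔ q := by
      have := inf_add_sup (ε • t) q
      rw [hεtq, zero_add] at this
      exact this.symm
    have hsup : (ε • t) ⊔ q ≤ ε • e := by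
      refine sup_le ?_ ?_
      · exact smul_le_smul_of_nonneg_left inf_le_left hε0.le
      · exact sup_le (sub_le_self _ hz) (my_smul_nonneg hε0.le he)
    have h1 : ε • t ≤ ε • e - q := by
      rw [le_sub_iff_add_le, hsum]; exact hsup
    have h2 : ε • e - q = z ⊓ (ε • e) := by
      rw [hqdef, sub_sup, sub_sub_cancel, sub_zero]
    rw [h2] at h1
    calc ε • t ≤ z ⊓ (ε • e) := h1
    _ ≤ z ⊓ e := inf_le_inf_left z (my_smul_le_self hε0.le hε1 he)
  have hbp : bandProjApply w e ≤ ε⁻¹ • (z ⊓ e) := by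
    refine ciSup_le fun n => ?_
    have := hkey n
    have h2 := smul_le_smul_of_nonneg_left this (le_of_lt (inv_pos.2 hε0))
    rwa [inv_smul_smul₀ hε0.ne'] at h2
  calc ε • bandProjApply w e ≤ ε • (ε⁻¹ • (z ⊓ e)) :=
    smul_le_smul_of_nonneg_left hbp hε0.le
  _ = z ⊓ e := smul_inv_smul₀ hε0.ne' _

/-- Key inequality: `z ⊓ e ≤ ε e + P_{(z - εe)⁺} e` for `ε ≥ 0`. -/
lemma my_key2 {ε : ℝ} (hε0 : 0 ≤ ε) {z e : X} (he : 0 ≤ e) :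
    z ⊓ e ≤ ε • e + bandProjApply ((z - ε • e) ⊔ 0) e := by
  set w : X := (z - ε • e) ⊔ 0 with hwdef
  have h1 : z ⊓ e - ε • e ≤ w ⊓ e := by
    rw [inf_sub]
    exact inf_le_inf le_sup_left (sub_le_self e (my_smul_nonneg hε0 he))
  have hbdd : BddAbove (Set.range fun n : ℕ => e ⊓ ((n + 1) • w)) :=
    ⟨e, by rintro _ ⟨n, rfl⟩; exact inf_le_left⟩
  have h2 : w ⊓ e ≤ bandProjApply w e := by
    calc w ⊓ e = e ⊓ ((0 + 1) • w) := by rw [inf_comm, zero_add, one_nsmul]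
    _ ≤ bandProjApply w e := le_ciSup hbdd 0
  have := le_trans h1 h2
  calc z ⊓ e = (z ⊓ e - ε • e) + ε • e := by abel
  _ ≤ bandProjApply w e + ε • e := add_le_add_left this _
  _ = ε • e + bandProjApply w e := by abel

lemma my_Tmono (T : X →ₗ[ℝ] X) (hTpos : ∀ z : X, 0 ≤ z → 0 ≤ T z)
    {a b : X} (h : a ≤ b) : T a ≤ T b := by
  have := hTpos (b - a) (sub_nonneg.2 h)
  rw [map_sub] at this
  exact sub_nonneg.1 this

/-- Squeeze: if `0 ≤ f a ≤ c • g a` pointwise and `g` order converges to `0`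
(with `g ≥ 0`), then `f` order converges to `0`. -/
lemma my_conv_of_le {A : Type v'} [Preorder A] {f g : A → X}
    (hf : ∀ a, 0 ≤ f a) {c : ℝ} (hc : 0 < c) (hle : ∀ a, f a ≤ c • g a)
    (h : OrderConvergesTo g 0) : OrderConvergesTo f 0 := by
  obtain ⟨B, r, y, hne, hrefl, htrans, hdir, hanti, hglb, hev⟩ := h
  refine ⟨B, r, fun b => c • y b, hne, hrefl, htrans, hdir,
    fun b₁ b₂ hb => smul_le_smul_of_nonneg_left (hanti _ _ hb) hc.le,
    my_glb_smul hc hglb, fun b => ?_⟩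
  obtain ⟨a₀, ha₀⟩ := hev b
  refine ⟨a₀, fun a ha => ?_⟩
  rw [sub_zero, abs_of_nonneg (hf a)]
  have h1 := ha₀ a ha
  rw [sub_zero] at h1
  have h2 : g a ≤ y b := le_trans (le_abs_self _) h1
  exact le_trans (hle a) (smul_le_smul_of_nonneg_left h2 hc.le)

/-- Archimedean property from Dedekind completeness. -/
lemma my_arch {e : X} (he : 0 ≤ e) {m : X}
    (hm : ∀ n : ℕ, m ≤ (1 / ((n : ℝ) + 1)) • e) : m ≤ 0 := by
  set p : X := m ⊔ 0 with hpdef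
  have hp0 : 0 ≤ p := le_sup_right
  have hp : ∀ n : ℕ, ((n : ℝ) + 1) • p ≤ e := by
    intro n
    have hpos : (0 : ℝ) < (n : ℝ) + 1 := by positivity
    have h1 : p ≤ (1 / ((n : ℝ) + 1)) • e :=
      sup_le (hm n) (my_smul_nonneg (by positivity) he)
    have := smul_le_smul_of_nonneg_left h1 hpos.le
    rwa [smul_smul, mul_one_div, div_self hpos.ne', one_smul] at this
  have hbdd : BddAbove (Set.range fun n : ℕ => ((n : ℝ) + 1) • p) :=
    ⟨e, by rintro _ ⟨n, rfl⟩; exact hp n⟩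
  set s : X := ⨆ n : ℕ, ((n : ℝ) + 1) • p with hsdef
  have hs : ∀ n : ℕ, ((n : ℝ) + 1) • p + p ≤ s := by
    intro n
    have h1 : (((n + 1 : ℕ) : ℝ) + 1) • p ≤ s := le_ciSup hbdd (n + 1)
    have h2 : (((n + 1 : ℕ) : ℝ) + 1) • p = ((n : ℝ) + 1) • p + p := by
      push_cast
      rw [show ((n : ℝ) + 1 + 1) = ((n : ℝ) + 1) + 1 by ring, add_smul, one_smul]
    rwa [h2] at h1
  have hss : s ≤ s - p := ciSup_le fun n => le_sub_iff_add_le.2 (hs n)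
  have hp_le : p ≤ 0 := by
    have := le_sub_iff_add_le.1 hss
    exact (add_le_iff_nonpos_right _).1 this
  exact le_trans le_sup_left hp_le

/-- Combining finitely many eventual properties over a directed index. -/
lemma my_eventually_forall {A : Type v'} [Preorder A]
    (hA : ∀ a b : A, ∃ c, a ≤ c ∧ b ≤ c) (p : ℕ → A → Prop)
    (hp : ∀ k : ℕ, ∃ a₀, ∀ a, a₀ ≤ a → p k a) (n : ℕ) :
    ∃ a₀, ∀ a, a₀ ≤ a → ∀ k ≤ n, p k a := by
  induction n with
  | zero =>
    obtain ⟨a₀, h⟩ := hp 0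
    exact ⟨a₀, fun a ha k hk => by rw [Nat.le_zero.1 hk]; exact h a ha⟩
  | succ n ih =>
    obtain ⟨a₁, h1⟩ := ih
    obtain ⟨a₂, h2⟩ := hp (n + 1)
    obtain ⟨c, hc1, hc2⟩ := hA a₁ a₂
    refine ⟨c, fun a ha k hk => ?_⟩
    rcases Nat.lt_succ_iff_lt_or_eq.1 (Nat.lt_succ_of_le hk) with h | h
    · exact h1 a (le_trans hc1 ha) k (Nat.lt_succ_iff.1 h)
    · rw [h]; exact h2 a (le_trans hc2 ha)

end Helpers

section Main

universe u' v'

variable {X : Type u'} [ConditionallyCompleteLattice X] [AddCommGroup X]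
    [CovariantClass X X (· + ·) (· ≤ ·)] [Module ℝ X] [PosSMulMono ℝ X]

/-- (iii) ⇒ (i). -/
lemma my_lemB {e : X} (he : 0 ≤ e) (T : X →ₗ[ℝ] X)
    (hTpos : ∀ z : X, 0 ≤ z → 0 ≤ T z)
    {A : Type v'} [Preorder A] (z : A → X) (hz : ∀ a, 0 ≤ z a)
    (h3 : OrderConvergesTo (fun a => T (z a ⊓ e)) 0) (ε : ℝ) (hε : 0 < ε) :
    OrderConvergesTo (fun a => T (bandProjApply ((z a - ε • e) ⊔ 0) e)) 0 := by
  set ε' : ℝ := min ε 1 with hε'def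
  have hε'0 : 0 < ε' := lt_min hε one_pos
  have hε'1 : ε' ≤ 1 := min_le_right _ _
  have hε'ε : ε' ≤ ε := min_le_left _ _
  refine my_conv_of_le (c := ε'⁻¹) (fun a => ?_) (inv_pos.2 hε'0) (fun a => ?_) h3
  · exact hTpos _ (my_bandProj_nonneg le_sup_right he)
  · have hww' : (z a - ε • e) ⊔ 0 ≤ (z a - ε' • e) ⊔ 0 :=
      sup_le_sup_right (sub_le_sub_left (my_smul_le_smul_right hε'ε he) _) 0
    have h1 : bandProjApply ((z a - ε • e) ⊔ 0) e ≤ bandProjApply ((z a - ε' • e) ⊔ 0) e :=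
      my_bandProj_mono hww'
    have h2 : ε' • bandProjApply ((z a - ε' • e) ⊔ 0) e ≤ z a ⊓ e :=
      my_key1 hε'0 hε'1 (hz a) he
    have h3' : bandProjApply ((z a - ε' • e) ⊔ 0) e ≤ ε'⁻¹ • (z a ⊓ e) := by
      have := smul_le_smul_of_nonneg_left h2 (le_of_lt (inv_pos.2 hε'0))
      rwa [inv_smul_smul₀ hε'0.ne'] at this
    have h4 : bandProjApply ((z a - ε • e) ⊔ 0) e ≤ ε'⁻¹ • (z a ⊓ e) := le_trans h1 h3'
    calc T (bandProjApply ((z a - ε • e) ⊔ 0) e) ≤ T (ε'⁻¹ • (z a ⊓ e)) :=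
      my_Tmono T hTpos h4
    _ = ε'⁻¹ • T (z a ⊓ e) := map_smul T _ _

/-- (iii) ⇒ (ii). -/
lemma my_lemA {e : X} (he : 0 ≤ e) (hwu : ∀ z : X, 0 ≤ z → z ⊓ e = 0 → z = 0)
    (T : X →ₗ[ℝ] X) (hTpos : ∀ z : X, 0 ≤ z → 0 ≤ T z)
    (hTcont : ∀ S : Set X, S.Nonempty → DirectedOn (· ≥ ·) S → IsGLB S 0 →
      IsGLB (T '' S) 0)
    {A : Type v'} [Preorder A] (z : A → X) (hz : ∀ a, 0 ≤ z a)
    (h3 : OrderConvergesTo (fun a => T (z a ⊓ e)) 0)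
    (u : X) (hu : 0 ≤ u) : OrderConvergesTo (fun a => T (z a ⊓ u)) 0 := by
  classical
  obtain ⟨B, r, y, hne, hrefl, htrans, hdir, hanti, hglb, hev⟩ := h3
  set g : ℕ → X := fun n => u - u ⊓ (((n : ℝ) + 1) • e) with hgdef
  have hg0 : ∀ n, 0 ≤ g n := fun n => sub_nonneg.2 inf_le_left
  have hgmono : ∀ n m : ℕ, n ≤ m → g m ≤ g n := by
    intro n m h
    refine sub_le_sub_left (inf_le_inf_left u ?_) u
    exact my_smul_le_smul_right (by exact_mod_cast (by omega : n + 1 ≤ m + 1)) he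
  have hbddS : BddAbove (Set.range fun n : ℕ => u ⊓ (((n : ℝ) + 1) • e)) :=
    ⟨u, by rintro _ ⟨n, rfl⟩; exact inf_le_left⟩
  set s : X := ⨆ n : ℕ, u ⊓ (((n : ℝ) + 1) • e) with hsdef
  have hsu : s ≤ u := ciSup_le fun n => inf_le_left
  set d : X := u - s with hddef
  have hd0 : 0 ≤ d := sub_nonneg.2 hsu
  have hde : d ⊓ e = 0 := by
    have hub : ∀ n : ℕ, u ⊓ (((n : ℝ) + 1) • e) + d ⊓ e ≤ s := by
      intro n
      have h1 : d ⊓ e + u ⊓ (((n : ℝ) + 1) • e) ≤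
          (d + u ⊓ (((n : ℝ) + 1) • e)) ⊓ (e + ((n : ℝ) + 1) • e) :=
        le_inf (add_le_add inf_le_left le_rfl) (add_le_add inf_le_right inf_le_right)
      have h2 : d + u ⊓ (((n : ℝ) + 1) • e) ≤ u := by
        have hle : u ⊓ (((n : ℝ) + 1) • e) ≤ s := le_ciSup hbddS n
        calc d + u ⊓ (((n : ℝ) + 1) • e) ≤ d + s := add_le_add_right hle d
        _ = u := by rw [hddef]; abel
      have h3 : e + ((n : ℝ) + 1) • e = (((n + 1 : ℕ) : ℝ) + 1) • e := by
        push_cast [add_smul, one_smul]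
        abel
      have h4 : u ⊓ ((((n + 1 : ℕ) : ℝ) + 1) • e) ≤ s := le_ciSup hbddS (n + 1)
      calc u ⊓ (((n : ℝ) + 1) • e) + d ⊓ e
          = d ⊓ e + u ⊓ (((n : ℝ) + 1) • e) := by abel
      _ ≤ (d + u ⊓ (((n : ℝ) + 1) • e)) ⊓ (e + ((n : ℝ) + 1) • e) := h1
      _ ≤ u ⊓ (e + ((n : ℝ) + 1) • e) := inf_le_inf_right _ h2
      _ = u ⊓ ((((n + 1 : ℕ) : ℝ) + 1) • e) := by rw [h3]
      _ ≤ s := h4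
    have hss : s ≤ s - d ⊓ e := ciSup_le fun n => le_sub_iff_add_le.2 (hub n)
    have h5 : d ⊓ e ≤ 0 := (add_le_iff_nonpos_right _).1 (le_sub_iff_add_le.1 hss)
    exact le_antisymm h5 (le_inf hd0 he)
  have hdz : d = 0 := hwu d hd0 hde
  have hglbg : IsGLB (Set.range g) 0 := by
    constructor
    · rintro _ ⟨n, rfl⟩; exact hg0 n
    · intro m hm
      have h1 : ∀ n : ℕ, u ⊓ (((n : ℝ) + 1) • e) ≤ u - m := by
        intro n
        have := hm ⟨n, rfl⟩
        exact le_sub_comm.1 this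
      have h2 : s ≤ u - m := ciSup_le h1
      have h3 : m ≤ u - s := le_sub_comm.1 h2
      rw [← hddef, hdz] at h3
      exact h3
  have hTg : IsGLB (T '' Set.range g) 0 := by
    refine hTcont _ ⟨g 0, ⟨0, rfl⟩⟩ ?_ hglbg
    rintro _ ⟨n, rfl⟩ _ ⟨m, rfl⟩
    exact ⟨g (max n m), ⟨max n m, rfl⟩, hgmono _ _ (le_max_left _ _),
      hgmono _ _ (le_max_right _ _)⟩
  have hy0 : ∀ b, 0 ≤ y b := fun b => hglb.1 ⟨b, rfl⟩
  have hF0 : ∀ (b : B) (k : ℕ), 0 ≤ ((k : ℝ) + 1) • y b + T (g k) := fun b k =>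
    add_nonneg (my_smul_nonneg (by positivity) (hy0 b)) (hTpos _ (hg0 k))
  refine ⟨B × ℕ, fun p q => r p.1 q.1 ∧ p.2 ≤ q.2,
    fun p => (Finset.range (p.2 + 1)).inf'
      (Finset.nonempty_range_iff.2 (Nat.succ_ne_zero _))
      (fun k => ((k : ℝ) + 1) • y p.1 + T (g k)),
    ⟨⟨hne.some, 0⟩⟩, fun p => ⟨hrefl _, le_refl _⟩,
    fun p q w hpq hqw => ⟨htrans _ _ _ hpq.1 hqw.1, le_trans hpq.2 hqw.2⟩,
    fun p q => by
      obtain ⟨b, hb1, hb2⟩ := hdir p.1 q.1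
      exact ⟨⟨b, max p.2 q.2⟩, ⟨hb1, le_max_left _ _⟩, ⟨hb2, le_max_right _ _⟩⟩,
    ?_, ?_, ?_⟩
  · intro p q hpq
    refine Finset.le_inf' _ _ fun k hk => ?_
    have hk' : k ∈ Finset.range (q.2 + 1) := by
      simp only [Finset.mem_range] at hk ⊢
      omega
    refine le_trans (Finset.inf'_le _ hk') ?_
    exact add_le_add_left
      (smul_le_smul_of_nonneg_left (hanti _ _ hpq.1) (by positivity)) _
  · constructor
    · rintro _ ⟨p, rfl⟩
      exact Finset.le_inf' _ _ fun k _ => hF0 p.1 k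
    · intro m hm
      have key : ∀ n : ℕ, m ≤ T (g n) := by
        intro n
        have h1 : ∀ b : B, m ≤ ((n : ℝ) + 1) • y b + T (g n) := by
          intro b
          refine le_trans (hm ⟨(b, n), rfl⟩) ?_
          exact Finset.inf'_le _ (by simp)
        have hpos : (0 : ℝ) < (n : ℝ) + 1 := by positivity
        have h2 : ∀ b : B, ((n : ℝ) + 1)⁻¹ • (m - T (g n)) ≤ y b := by
          intro b
          have h3 : m - T (g n) ≤ ((n : ℝ) + 1) • y b := sub_le_iff_le_add.2 (h1 b)
          have := smul_le_smul_of_nonneg_left h3 (le_of_lt (inv_pos.2 hpos))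
          rwa [inv_smul_smul₀ hpos.ne'] at this
        have h4 : ((n : ℝ) + 1)⁻¹ • (m - T (g n)) ≤ 0 := by
          refine hglb.2 ?_
          rintro _ ⟨b, rfl⟩
          exact h2 b
        have h5 := smul_le_smul_of_nonneg_left h4 hpos.le
        rw [smul_inv_smul₀ hpos.ne', smul_zero] at h5
        exact sub_nonpos.1 h5
      refine hTg.2 ?_
      rintro _ ⟨_, ⟨n, rfl⟩, rfl⟩
      exact key n
  · intro p
    obtain ⟨a₀, ha₀⟩ := hev p.1
    refine ⟨a₀, fun a ha => ?_⟩
    rw [sub_zero, abs_of_nonneg (hTpos _ (le_inf (hz a) hu))]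
    refine Finset.le_inf' _ _ fun k _ => ?_
    have hc1 : (1 : ℝ) ≤ (k : ℝ) + 1 := by
      linarith [show (0:ℝ) ≤ (k:ℝ) from Nat.cast_nonneg k]
    have key : z a ⊓ u ≤ ((k : ℝ) + 1) • (z a ⊓ e) + g k := by
      have h1 : z a ⊓ u - g k ≤ z a ⊓ (((k : ℝ) + 1) • e) := by
        have e1 : u - g k = u ⊓ (((k : ℝ) + 1) • e) := by simp only [hgdef]; abel
        have e2 : z a ⊓ u - g k = (z a - g k) ⊓ (u - g k) := inf_sub _ _ _
        rw [e2, e1]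
        exact inf_le_inf (sub_le_self _ (hg0 k)) inf_le_right
      have h2 : z a ⊓ (((k : ℝ) + 1) • e) ≤ ((k : ℝ) + 1) • (z a ⊓ e) :=
        my_inf_smul_le hc1 (hz a) he
      calc z a ⊓ u = (z a ⊓ u - g k) + g k := by abel
      _ ≤ z a ⊓ (((k : ℝ) + 1) • e) + g k := add_le_add_left h1 _
      _ ≤ ((k : ℝ) + 1) • (z a ⊓ e) + g k := add_le_add_left h2 _
    have hTz : T (z a ⊓ e) ≤ y p.1 := by
      have := ha₀ a ha
      rw [sub_zero] at this
      exact le_trans (le_abs_self _) this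
    calc T (z a ⊓ u) ≤ T (((k : ℝ) + 1) • (z a ⊓ e) + g k) := my_Tmono T hTpos key
    _ = ((k : ℝ) + 1) • T (z a ⊓ e) + T (g k) := by rw [map_add, map_smul]
    _ ≤ ((k : ℝ) + 1) • y p.1 + T (g k) :=
      add_le_add_left (smul_le_smul_of_nonneg_left hTz (by positivity)) _

/-- (i) ⇒ (iii). -/
lemma my_lemC {e : X} (he : 0 ≤ e) (T : X →ₗ[ℝ] X)
    (hTpos : ∀ z : X, 0 ≤ z → 0 ≤ T z) (hTe : T e = e)
    {A : Type v'} [Preorder A] (hA : ∀ a b : A, ∃ c, a ≤ c ∧ b ≤ c)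
    (z : A → X) (hz : ∀ a, 0 ≤ z a)
    (h1 : ∀ ε : ℝ, 0 < ε →
      OrderConvergesTo (fun a => T (bandProjApply ((z a - ε • e) ⊔ 0) e)) 0) :
    OrderConvergesTo (fun a => T (z a ⊓ e)) 0 := by
  classical
  have hk : ∀ k : ℕ, OrderConvergesTo
      (fun a => T (bandProjApply ((z a - (1 / ((k : ℝ) + 1)) • e) ⊔ 0) e)) 0 :=
    fun k => h1 _ (by positivity)
  choose B r y hne hrefl htrans hdir hanti hglb hev using hk
  have hy0 : ∀ (k : ℕ) (b : B k), 0 ≤ y k b := fun k b => (hglb k).1 ⟨b, rfl⟩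
  have hF0 : ∀ (k : ℕ) (b : B k), 0 ≤ (1 / ((k : ℝ) + 1)) • e + y k b := fun k b =>
    add_nonneg (my_smul_nonneg (by positivity) he) (hy0 k b)
  refine ⟨((k : ℕ) → B k) × ℕ,
    fun p q => (∀ k, r k (p.1 k) (q.1 k)) ∧ p.2 ≤ q.2,
    fun p => (Finset.range (p.2 + 1)).inf'
      (Finset.nonempty_range_iff.2 (Nat.succ_ne_zero _))
      (fun k => (1 / ((k : ℝ) + 1)) • e + y k (p.1 k)),
    ⟨⟨fun k => (hne k).some, 0⟩⟩,
    fun p => ⟨fun k => hrefl k _, le_refl _⟩,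
    fun p q w hpq hqw => ⟨fun k => htrans k _ _ _ (hpq.1 k) (hqw.1 k),
      le_trans hpq.2 hqw.2⟩,
    fun p q => by
      choose f hf using fun k => hdir k (p.1 k) (q.1 k)
      exact ⟨⟨f, max p.2 q.2⟩, ⟨fun k => (hf k).1, le_max_left _ _⟩,
        ⟨fun k => (hf k).2, le_max_right _ _⟩⟩,
    ?_, ?_, ?_⟩
  · intro p q hpq
    refine Finset.le_inf' _ _ fun k hk => ?_
    have hk' : k ∈ Finset.range (q.2 + 1) := by
      simp only [Finset.mem_range] at hk ⊢
      omega
    refine le_trans (Finset.inf'_le _ hk') ?_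
    exact add_le_add_right (hanti k _ _ (hpq.1 k)) _
  · constructor
    · rintro _ ⟨p, rfl⟩
      exact Finset.le_inf' _ _ fun k _ => hF0 k (p.1 k)
    · intro m hm
      have key : ∀ k : ℕ, m ≤ (1 / ((k : ℝ) + 1)) • e := by
        intro k
        have h2 : ∀ b : B k, m - (1 / ((k : ℝ) + 1)) • e ≤ y k b := by
          intro b
          set f : (j : ℕ) → B j := Function.update (fun j => (hne j).some) k b with hfdef
          have h3 : m ≤ (1 / ((k : ℝ) + 1)) • e + y k (f k) := by
            refine le_trans (hm ⟨(f, k), rfl⟩) ?_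
            exact Finset.inf'_le _ (by simp)
          have h4 : f k = b := Function.update_self k b _
          rw [h4] at h3
          exact sub_le_iff_le_add'.2 h3
        have h5 : m - (1 / ((k : ℝ) + 1)) • e ≤ 0 := by
          refine (hglb k).2 ?_
          rintro _ ⟨b, rfl⟩
          exact h2 b
        exact sub_nonpos.1 h5
      exact my_arch he key
  · intro p
    have hp : ∀ k : ℕ, ∃ a₀ : A, ∀ a, a₀ ≤ a →
        T (bandProjApply ((z a - (1 / ((k : ℝ) + 1)) • e) ⊔ 0) e) ≤ y k (p.1 k) := by
      intro k
      obtain ⟨a₀, ha₀⟩ := hev k (p.1 k)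
      refine ⟨a₀, fun a ha => ?_⟩
      have := ha₀ a ha
      rw [sub_zero] at this
      exact le_trans (le_abs_self _) this
    obtain ⟨a₀, ha₀⟩ := my_eventually_forall hA _ hp p.2
    refine ⟨a₀, fun a ha => ?_⟩
    rw [sub_zero, abs_of_nonneg (hTpos _ (le_inf (hz a) he))]
    refine Finset.le_inf' _ _ fun k hk => ?_
    have hkle : k ≤ p.2 := Nat.lt_succ_iff.1 (Finset.mem_range.1 hk)
    have key : z a ⊓ e ≤ (1 / ((k : ℝ) + 1)) • e +
        bandProjApply ((z a - (1 / ((k : ℝ) + 1)) • e) ⊔ 0) e :=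
      my_key2 (by positivity) he
    calc T (z a ⊓ e)
        ≤ T ((1 / ((k : ℝ) + 1)) • e +
          bandProjApply ((z a - (1 / ((k : ℝ) + 1)) • e) ⊔ 0) e) :=
      my_Tmono T hTpos key
    _ = (1 / ((k : ℝ) + 1)) • e +
        T (bandProjApply ((z a - (1 / ((k : ℝ) + 1)) • e) ⊔ 0) e) := by
      rw [map_add, map_smul, hTe]
    _ ≤ (1 / ((k : ℝ) + 1)) • e + y k (p.1 k) :=
      add_le_add_right (ha₀ a ha k hkle) _

end Main

theorem stmt0 {X : Type u} [ConditionallyCompleteLattice X] [AddCommGroup X]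
    [CovariantClass X X (· + ·) (· ≤ ·)] [Module ℝ X] [PosSMulMono ℝ X]
    -- weak order unit
    (e : X) (he : 0 < e) (hwu : ∀ z : X, 0 ≤ z → z ⊓ e = 0 → z = 0)
    -- conditional expectation operator with `T e = e`
    (T : X →ₗ[ℝ] X)
    (hTpos : ∀ z : X, 0 ≤ z → 0 ≤ T z)
    (hTstrict : ∀ z : X, 0 ≤ z → T z = 0 → z = 0)
    (hTcont : ∀ S : Set X, S.Nonempty → DirectedOn (· ≥ ·) S → IsGLB S 0 →
      IsGLB (T '' S) 0)
    (hTidem : ∀ z : X, T (T z) = T z)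
    (hTe : T e = e)
    -- a net in `X`
    {A : Type v} [Preorder A] [Nonempty A] (hA : ∀ a b : A, ∃ c, a ≤ c ∧ b ≤ c)
    (x : A → X) (l : X) :
    ((∀ ε : ℝ, 0 < ε →
        OrderConvergesTo
          (fun a => T (bandProjApply ((|x a - l| - ε • e) ⊔ 0) e)) (0 : X)) ↔
      (∀ u : X, 0 ≤ u → OrderConvergesTo (fun a => T (|x a - l| ⊓ u)) (0 : X))) ∧
    ((∀ u : X, 0 ≤ u → OrderConvergesTo (fun a => T (|x a - l| ⊓ u)) (0 : X)) ↔
      OrderConvergesTo (fun a => T (|x a - l| ⊓ e)) (0 : X)) := by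
  have hz : ∀ a : A, 0 ≤ |x a - l| := fun a => abs_nonneg _
  constructor
  · constructor
    · intro p1 u hu
      exact my_lemA he.le hwu T hTpos hTcont _ hz
        (my_lemC he.le T hTpos hTe hA _ hz p1) u hu
    · intro p2 ε hε
      exact my_lemB he.le T hTpos _ hz (p2 e he.le) ε hε
  · constructor
    · intro p2
      exact p2 e he.le
    · intro p3 u hu
      exact my_lemA he.le hwu T hTpos hTcont _ hz p3 u hu
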